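/- Let F be a linear ordered field equipped with its order topology and X a completely F-regular space. Then X is an almost P_F-space (every nonempty zero set Z(f) with f ∈ C(X,F) has nonempty interior in X) if and only if every maximal ideal of C(X,F) is a z°-ideal. -/

import Mathlib

open Set

/-- `Pz a` : the intersection of all minimal prime ideals of `R` which contain `a`. -/
def Pz {R : Type*} [CommRing R] (a : R) : Set R :=
  ⋂ P ∈ {P : Ideal R | P ∈ minimalPrimes R ∧ a ∈ P}, (P : Set R)

/-- A proper ideal `I` is a `z°`-ideal if `Pz a ⊆ I` for every `a ∈ I`. -/
def IsZoIdeal {R : Type*} [CommRing R] (I : Ideal R) : Prop :=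
  I ≠ ⊤ ∧ ∀ a ∈ I, Pz a ⊆ (I : Set R)

/-- The zero set `Z(f)` of a continuous function `f`. -/
def ZSet {X F : Type*} [TopologicalSpace X] [TopologicalSpace F] [Zero F]
    (f : C(X, F)) : Set X := {x | f x = 0}

/-- `f` is bounded over `X` (i.e. `f ∈ B(X,F)`). -/
def BddF {X F : Type*} [TopologicalSpace X] [Field F] [LinearOrder F] [IsStrictOrderedRing F] [TopologicalSpace F]
    (f : C(X, F)) : Prop := ∃ l : F, 0 < l ∧ ∀ x, |f x| ≤ l

/-- `X` is completely `F`-regular: Hausdorff, and points can be separated from closed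
sets by bounded `F`-valued continuous functions. -/
def CompletelyFRegular (X F : Type*) [TopologicalSpace X] [Field F] [LinearOrder F] [IsStrictOrderedRing F]
    [TopologicalSpace F] : Prop :=
  T2Space X ∧ ∀ K : Set X, IsClosed K → ∀ x ∉ K, ∃ f : C(X, F),
    BddF f ∧ f x = 0 ∧ ∀ k ∈ K, f k = 1

/-- `A` is an intermediate ring: a subring of `C(X,F)` containing all of `B(X,F)`. -/
def IsIntermediate {X F : Type*} [TopologicalSpace X] [Field F] [LinearOrder F] [IsStrictOrderedRing F]
    [TopologicalSpace F] [OrderTopology F] (A : Subring C(X, F)) : Prop :=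
  ∀ f : C(X, F), BddF f → f ∈ A

/-- An ideal of closed sets in `X`: a nonempty family of closed sets, closed under
finite unions and under passing to closed subsets. -/
def IsIdealOfClosedSets {X : Type*} [TopologicalSpace X] (P : Set (Set X)) : Prop :=
  P.Nonempty ∧ (∀ A ∈ P, IsClosed A) ∧ (∀ A ∈ P, ∀ B ∈ P, A ∪ B ∈ P) ∧
    ∀ C : Set X, IsClosed C → ∀ A ∈ P, C ⊆ A → C ∈ P

/-- `X` is an almost `P_F`-space: every nonempty zero set has nonempty interior. -/
def AlmostPF (X F : Type*) [TopologicalSpace X] [Field F] [LinearOrder F] [IsStrictOrderedRing F]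
    [TopologicalSpace F] : Prop :=
  ∀ f : C(X, F), (ZSet f).Nonempty → (interior (ZSet f)).Nonempty



section AuxB
variable {R : Type*} [CommRing R] [IsReduced R]

/-- In a reduced commutative ring, every element of a minimal prime is annihilated by an
element outside that prime. -/
lemma minimal_prime_ann {P : Ideal R} (hP : P ∈ minimalPrimes R)
    {a : R} (ha : a ∈ P) : ∃ s ∉ P, s * a = 0 := by
  have hprime : P.IsPrime := hP.1.1
  set S := Submonoid.closure ({a} ∪ (P : Set R)ᶜ) with hS
  by_cases h0 : (0 : R) ∈ S
  · have key : ∃ s ∉ P, ∃ n : ℕ, (0 : R) = s * a ^ n := by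
      refine Submonoid.closure_induction (motive := fun x _ => ∃ s ∉ P, ∃ n : ℕ, x = s * a ^ n)
        ?_ ?_ ?_ h0
      · rintro x (rfl | hx)
        · exact ⟨1, fun h => hprime.ne_top (Ideal.eq_top_of_isUnit_mem _ h isUnit_one),
            1, by ring⟩
        · exact ⟨x, hx, 0, by ring⟩
      · exact ⟨1, fun h => hprime.ne_top (Ideal.eq_top_of_isUnit_mem _ h isUnit_one), 0, by ring⟩
      · rintro x y _ _ ⟨s, hs, n, rfl⟩ ⟨t, ht, m, rfl⟩
        exact ⟨s * t, fun h => ((hprime.mem_or_mem h).elim hs ht), n + m, by ring⟩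
    obtain ⟨s, hs, n, hsn⟩ := key
    refine ⟨s, hs, ?_⟩
    have hnil : (s * a) ^ (n + 1) = 0 := by
      have h2 : s * a ^ n = 0 := hsn.symm
      calc (s * a) ^ (n + 1) = s ^ n * a * (s * a ^ n) := by ring
        _ = 0 := by rw [h2, mul_zero]
    exact IsNilpotent.eq_zero ⟨n + 1, hnil⟩
  · exfalso
    have hdis : Disjoint ((⊥ : Ideal R) : Set R) (S : Set R) := by
      rw [Set.disjoint_left]
      intro x hx
      simp only [Ideal.mem_bot, SetLike.mem_coe] at *
      rcases hx with rfl
      exact fun h => h0 h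
    obtain ⟨Q, hQp, -, hQd⟩ := Ideal.exists_le_prime_disjoint ⊥ S hdis
    have hQP : Q ≤ P := by
      intro x hx
      by_contra hxP
      exact Set.disjoint_left.mp hQd hx (Submonoid.subset_closure (Or.inr hxP))
    have hPQ : P ≤ Q := hP.2 ⟨hQp, bot_le⟩ hQP
    exact Set.disjoint_left.mp hQd (hPQ ha) (Submonoid.subset_closure (Or.inl rfl))

end AuxB

section AuxA
variable {X F : Type*} [TopologicalSpace X] [Field F] [LinearOrder F] [IsStrictOrderedRing F]
    [TopologicalSpace F] [OrderTopology F]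

instance : IsReduced C(X, F) := by
  constructor
  intro f ⟨n, hn⟩
  ext z
  rcases Nat.eq_zero_or_pos n with rfl | hpos
  · have h1' : (1 : C(X, F)) = 0 := by simpa using hn
    have h1 : (1 : F) = 0 := by
      have := congrArg (fun g : C(X, F) => g z) h1'
      simpa using this
    exact absurd h1 one_ne_zero
  · have hz : (f z) ^ n = 0 := by
      have := congrArg (fun g : C(X, F) => g z) hn
      simpa using this
    simpa using pow_eq_zero_iff hpos.ne' |>.mp hz

/-- If `g` lies in every minimal prime containing `f`, then `g` vanishes on the
interior of the zero set of `f`. -/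
lemma pz_vanish (hX : CompletelyFRegular X F) {f g : C(X, F)}
    (hg : g ∈ Pz f) {x : X} (hx : x ∈ interior (ZSet f)) : g x = 0 := by
  by_contra hgx
  obtain ⟨f₀, -, hf₀x, hf₀K⟩ := hX.2 (interior (ZSet f))ᶜ isOpen_interior.isClosed_compl x
    (by simpa using hx)
  set u : C(X, F) := 1 - f₀ with hu
  have hux : u x = 1 := by simp [hu, hf₀x]
  have hu0 : ∀ y, y ∉ interior (ZSet f) → u y = 0 := by
    intro y hy
    simp [hu, hf₀K y hy]
  have huf : u * f = 0 := by
    ext y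
    by_cases hy : y ∈ interior (ZSet f)
    · have hfy : f y = 0 := (interior_subset hy : y ∈ ZSet f)
      simp [hfy]
    · simp [hu0 y hy]
  set S := Submonoid.closure ({u, g} : Set C(X, F)) with hS
  have h0 : (0 : C(X, F)) ∉ S := by
    intro h0
    have key : ∀ s ∈ S, (s : C(X, F)) x ≠ 0 := by
      intro s hs
      refine Submonoid.closure_induction (motive := fun t _ => t x ≠ 0) ?_ ?_ ?_ hs
      · rintro t (rfl | rfl)
        · rw [hux]; exact one_ne_zero
        · exact hgx
      · simp
      · intro a b _ _ ha hb
        simp only [ContinuousMap.mul_apply]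
        exact mul_ne_zero ha hb
    exact key 0 h0 rfl
  have hdis : Disjoint ((⊥ : Ideal C(X, F)) : Set C(X, F)) (S : Set C(X, F)) := by
    rw [Set.disjoint_left]
    intro t ht
    simp only [SetLike.mem_coe, Ideal.mem_bot] at ht
    rcases ht with rfl
    exact h0
  obtain ⟨Q₀, hQ₀p, -, hQ₀d⟩ := Ideal.exists_le_prime_disjoint ⊥ S hdis
  haveI := hQ₀p
  obtain ⟨Q, hQmin, hQle⟩ := Ideal.exists_minimalPrimes_le (I := ⊥) bot_le (J := Q₀)
  have hQmin' : Q ∈ minimalPrimes C(X, F) := hQmin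
  have hfQ : f ∈ Q := by
    have hufQ : u * f ∈ Q := by rw [huf]; exact Q.zero_mem
    rcases hQmin.1.1.mem_or_mem hufQ with hu' | hf'
    · exact absurd (Submonoid.subset_closure (by simp : u ∈ ({u, g} : Set C(X, F))))
        (Set.disjoint_left.mp hQ₀d (hQle hu'))
    · exact hf'
  have hgQ : g ∈ Q := Set.mem_iInter₂.mp hg Q ⟨hQmin', hfQ⟩
  exact Set.disjoint_left.mp hQ₀d (hQle hgQ)
    (Submonoid.subset_closure (by simp : g ∈ ({u, g} : Set C(X, F))))

end AuxA

/-- X is an almost P_F-space iff every maximal ideal of C(X,F) is a z°-ideal. -/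
theorem stmt15 {X F : Type*} [TopologicalSpace X] [Field F] [LinearOrder F] [IsStrictOrderedRing F]
    [TopologicalSpace F] [OrderTopology F]
    (hX : CompletelyFRegular X F) :
    AlmostPF X F ↔
      ∀ M : Ideal C(X, F), M.IsMaximal → ∀ a ∈ M, Pz a ⊆ (M : Set C(X, F)) := by
  constructor
  · -- Almost P_F ⇒ maximal ideals are z°-ideals
    intro hAP M hM a haM g hg
    by_contra hgM
    obtain ⟨c, y, hyM, hcy⟩ := hM.exists_inv hgM
    set k : C(X, F) := a * a + y * y with hk
    have hkM : k ∈ M := M.add_mem (M.mul_mem_left a haM) (M.mul_mem_left y hyM)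
    have hZk : ∀ z, z ∈ ZSet k → a z = 0 ∧ g z ≠ 0 := by
      intro z hz
      have hz' : a z * a z + y z * y z = 0 := hz
      have hze : a z * a z = 0 ∧ y z * y z = 0 :=
        (add_eq_zero_iff_of_nonneg (mul_self_nonneg _) (mul_self_nonneg _)).mp hz'
      have haz : a z = 0 := mul_self_eq_zero.mp hze.1
      have hyz : y z = 0 := mul_self_eq_zero.mp hze.2
      refine ⟨haz, fun hgz => ?_⟩
      have := congrArg (fun t : C(X, F) => t z) hcy
      simp only [ContinuousMap.add_apply, ContinuousMap.mul_apply, ContinuousMap.one_apply,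
        hgz, hyz, mul_zero, add_zero] at this
      exact one_ne_zero this.symm
    have hempty : ZSet k = ∅ := by
      by_contra hne
      obtain ⟨p, hp⟩ := hAP k (Set.nonempty_iff_ne_empty.mpr hne)
      have hsub : ZSet k ⊆ ZSet a := fun z hz => (hZk z hz).1
      have hpa : p ∈ interior (ZSet a) := interior_mono hsub hp
      exact (hZk p (interior_subset hp)).2 (pz_vanish hX hg hpa)
    have hknz : ∀ z, k z ≠ 0 := fun z hz =>
      (Set.eq_empty_iff_forall_notMem.mp hempty z) hz
    have hunit : IsUnit k := by
      refine IsUnit.of_mul_eq_one (a := k) ⟨fun z => (k z)⁻¹, k.continuous.inv₀ hknz⟩ ?_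
      ext z
      exact mul_inv_cancel₀ (hknz z)
    exact hM.ne_top (Ideal.eq_top_of_isUnit_mem M hkM hunit)
  · -- maximal ideals z° ⇒ Almost P_F
    intro h f hne
    by_contra hint
    rw [Set.not_nonempty_iff_eq_empty] at hint
    obtain ⟨x, hx⟩ := hne
    set ev : C(X, F) →+* F :=
      (Pi.evalRingHom (fun _ : X => F) x).comp ContinuousMap.coeFnRingHom with hev
    have hsurj : Function.Surjective ev := fun c => ⟨ContinuousMap.const X c, rfl⟩
    haveI hMmax : (RingHom.ker ev).IsMaximal := RingHom.ker_isMaximal_of_surjective ev hsurj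
    have hfM : f ∈ RingHom.ker ev := by
      have hfx : f x = 0 := hx
      simpa [hev, RingHom.mem_ker] using hfx
    have h1 : (1 : C(X, F)) ∈ Pz f := by
      apply Set.mem_iInter₂.mpr
      rintro P ⟨hPmin, hfP⟩
      exfalso
      obtain ⟨s, hsP, hsf⟩ := minimal_prime_ann hPmin hfP
      have hdense : Dense (ZSet f)ᶜ := interior_eq_empty_iff_dense_compl.mp hint
      have hcoe : (s : X → F) = ((0 : C(X, F)) : X → F) := by
        refine Continuous.ext_on hdense s.continuous (map_continuous _) ?_
        intro z hz
        have hfz : f z ≠ 0 := hz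
        have hsz : s z * f z = 0 := by
          have := congrArg (fun t : C(X, F) => t z) hsf
          simpa using this
        rcases mul_eq_zero.mp hsz with h' | h'
        · simpa using h'
        · exact absurd h' hfz
      have hs0 : s = 0 := ContinuousMap.ext fun z => congrFun hcoe z
      exact hsP (hs0 ▸ P.zero_mem)
    have : (1 : C(X, F)) ∈ RingHom.ker ev := h (RingHom.ker ev) hMmax f hfM h1
    have h10 : (1 : F) = 0 := by simpa [hev, RingHom.mem_ker] using this
    exact one_ne_zero h10
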